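/- arXiv:1510.04837 — 2 statements merged into one kernel-verified Lean document; each statement's English description precedes it below -/
import Mathlib

section
/- Let α > −1 be real and l, p, k integers ≥ 0, and n = l + 2p. Then the moment J_{nk}^{l,α} = ∫₀¹ ρ^{l+2k+2} R_n^{l,α}(ρ) dρ vanishes for k = 0, 1, …, p−1, and for k ≥ p it equals (1/2) · k!/((k−p)! p!) · Γ(p+α+1) Γ(k+l+3/2) / Γ(k+l+p+α+5/2). -/
open Real MeasureTheory

noncomputable def genBinom (a : ℝ) (p : ℕ) : ℝ :=
  (∏ j ∈ Finset.range p, (a - j)) / (Nat.factorial p : ℝ)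

noncomputable def jacobiP (k : ℕ) (a b : ℝ) (x : ℝ) : ℝ :=
  ∑ j ∈ Finset.range (k + 1),
    genBinom ((k : ℝ) + a) (k - j) * genBinom ((k : ℝ) + b) j *
      ((x - 1) / 2) ^ j * ((x + 1) / 2) ^ (k - j)

/-- generalized Pochhammer symbol `(x)_α = Γ(x+α)/Γ(x)` -/
noncomputable def pochG (x α : ℝ) : ℝ := Real.Gamma (x + α) / Real.Gamma x

/-- integer-order Pochhammer symbol `(x)_k = x(x+1)⋯(x+k−1)` -/
noncomputable def pochN (x : ℝ) (k : ℕ) : ℝ := ∏ j ∈ Finset.range k, (x + j)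

/-- generalized 3D Zernike radial function `R_{l+2p}^{l,α}` -/
noncomputable def R3 (α : ℝ) (l p : ℕ) (ρ : ℝ) : ℝ :=
  ρ ^ l * (1 - ρ ^ 2) ^ α * jacobiP p α ((l : ℝ) + 1 / 2) (2 * ρ ^ 2 - 1)

/-- generalized 2D Zernike radial function `²R_{m+2p}^{m,α}` -/
noncomputable def R2 (α : ℝ) (m p : ℕ) (ρ : ℝ) : ℝ :=
  ρ ^ m * (1 - ρ ^ 2) ^ α * jacobiP p α (m : ℝ) (2 * ρ ^ 2 - 1)

/-- spherical Bessel function of real order `a` -/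
noncomputable def sphBessel (a : ℝ) (z : ℝ) : ℝ :=
  Real.sqrt π / 2 * (z / 2) ^ a *
    ∑' k : ℕ, (-(z ^ 2) / 4) ^ k / ((Nat.factorial k : ℝ) * Real.Gamma ((k : ℝ) + a + 3 / 2))

/-- Gegenbauer polynomial `C_n^λ` -/
noncomputable def gegenbauer (n : ℕ) (lam : ℝ) (x : ℝ) : ℝ :=
  ∑ k ∈ Finset.range (n / 2 + 1),
    (-1) ^ k * Real.Gamma (((n - k : ℕ) : ℝ) + lam) /
      (Real.Gamma lam * (Nat.factorial k : ℝ) * (Nat.factorial (n - 2 * k) : ℝ)) *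
      (2 * x) ^ (n - 2 * k)

/-- Legendre polynomial `P_l` -/
noncomputable def legendreFun (l : ℕ) (x : ℝ) : ℝ :=
  (1 / 2 ^ l) * ∑ k ∈ Finset.range (l + 1),
    ((Nat.choose l k : ℝ)) ^ 2 * (x - 1) ^ (l - k) * (x + 1) ^ k

/-- associated Legendre function `P_l^m` -/
noncomputable def assocLegendre (l m : ℕ) (x : ℝ) : ℝ :=
  (1 - x ^ 2) ^ ((m : ℝ) / 2) * iteratedDeriv m (legendreFun l) x

/-- spherical harmonic `Y_l^m`, evaluated at a (unit) vector `v ∈ ℝ³`: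
`cos θ = v 2`, `φ = arg (v 0 + i v 1)`. -/
noncomputable def sphHarm (l : ℕ) (m : ℤ) (v : EuclideanSpace ℝ (Fin 3)) : ℂ :=
  (-1 : ℂ) ^ m *
    (Real.sqrt ((2 * l + 1) / (4 * π) *
      (Nat.factorial (l - m.natAbs) : ℝ) / (Nat.factorial (l + m.natAbs) : ℝ)) : ℝ) *
    (assocLegendre l m.natAbs (v 2) : ℝ) *
    Complex.exp (Complex.I * m * (Complex.arg (v 0 + Complex.I * v 1) : ℝ))

/-- generalized 3D Zernike function `Z_{nl}^{m,α}` on ℝ³ -/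
noncomputable def Z3 (α : ℝ) (l p : ℕ) (m : ℤ) (ω : EuclideanSpace ℝ (Fin 3)) : ℂ :=
  (R3 α l p ‖ω‖ : ℝ) * sphHarm l m (‖ω‖⁻¹ • ω)

lemma betaReal_integrable {u v : ℝ} (hu : 0 < u) (hv : 0 < v) :
    IntervalIntegrable (fun x : ℝ => x ^ (u - 1) * (1 - x) ^ (v - 1)) volume 0 1 := by
  have h := Complex.betaIntegral_convergent (u := (u:ℂ)) (v := (v:ℂ)) (by simpa) (by simpa)
  have h2 : IntervalIntegrable
      (fun x : ℝ => ((x:ℂ) ^ ((u:ℂ) - 1) * (1 - (x:ℂ)) ^ ((v:ℂ) - 1)).re) volume 0 1 :=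
    ⟨Complex.reCLM.integrable_comp h.1, Complex.reCLM.integrable_comp h.2⟩
  rw [intervalIntegrable_iff] at h2 ⊢
  refine h2.congr_fun (fun x hx => ?_) measurableSet_uIoc
  rw [Set.uIoc_of_le (by norm_num : (0:ℝ) ≤ 1)] at hx
  have h1x : (0:ℝ) ≤ 1 - x := by linarith [hx.2]
  dsimp only
  rw [show ((u:ℂ) - 1) = ((u - 1 : ℝ) : ℂ) by push_cast; ring,
    show ((v:ℂ) - 1) = ((v - 1 : ℝ) : ℂ) by push_cast; ring,
    show (1 - (x:ℂ)) = ((1 - x : ℝ) : ℂ) by push_cast; ring,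
    ← Complex.ofReal_cpow hx.1.le, ← Complex.ofReal_cpow h1x, ← Complex.ofReal_mul]
  exact Complex.ofReal_re _

lemma betaReal_eq {u v : ℝ} (hu : 0 < u) (hv : 0 < v) :
    ∫ x in (0:ℝ)..1, x ^ (u - 1) * (1 - x) ^ (v - 1)
      = Real.Gamma u * Real.Gamma v / Real.Gamma (u + v) := by
  have key : Complex.betaIntegral u v
      = ((∫ x in (0:ℝ)..1, x ^ (u - 1) * (1 - x) ^ (v - 1) : ℝ) : ℂ) := by
    have hoc : ((∫ x in (0:ℝ)..1, x ^ (u - 1) * (1 - x) ^ (v - 1) : ℝ) : ℂ)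
        = ∫ x in (0:ℝ)..1, ((x ^ (u - 1) * (1 - x) ^ (v - 1) : ℝ) : ℂ) :=
      (RCLike.intervalIntegral_ofReal (𝕜 := ℂ)).symm
    rw [Complex.betaIntegral, hoc]
    apply intervalIntegral.integral_congr
    intro x hx
    dsimp only
    rw [Set.uIcc_of_le (by norm_num : (0:ℝ) ≤ 1)] at hx
    have h1x : (0:ℝ) ≤ 1 - x := by linarith [hx.2]
    rw [show ((u:ℂ) - 1) = ((u - 1 : ℝ) : ℂ) by push_cast; ring,
      show ((v:ℂ) - 1) = ((v - 1 : ℝ) : ℂ) by push_cast; ring,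
      show (1 - (x:ℂ)) = ((1 - x : ℝ) : ℂ) by push_cast; ring,
      ← Complex.ofReal_cpow hx.1, ← Complex.ofReal_cpow h1x, ← Complex.ofReal_mul]
  have h := Complex.Gamma_mul_Gamma_eq_betaIntegral (s := (u:ℂ)) (t := (v:ℂ)) (by simpa) (by simpa)
  rw [key, show (u:ℂ) + (v:ℂ) = ((u + v : ℝ) : ℂ) by push_cast; ring,
    Complex.Gamma_ofReal, Complex.Gamma_ofReal, Complex.Gamma_ofReal,
    ← Complex.ofReal_mul, ← Complex.ofReal_mul] at h
  have h' := Complex.ofReal_inj.mp h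
  have hpos : Real.Gamma (u + v) ≠ 0 := (Real.Gamma_pos_of_pos (by linarith)).ne'
  field_simp
  linarith [h']

lemma intInt {φ : ℝ → ℝ} (hφ : ContinuousOn φ (Set.uIcc 0 1)) {β : ℝ} (hβ : -1 < β) :
    IntervalIntegrable (fun ρ => φ ρ * (1 - ρ ^ 2) ^ β) volume 0 1 := by
  have h1 : IntervalIntegrable (fun ρ : ℝ => (1 - ρ) ^ β) volume 0 1 := by
    have := (intervalIntegral.intervalIntegrable_rpow' (a := 0) (b := 1) hβ).comp_sub_left 1
    norm_num at this
    exact this.symm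
  have hc : ContinuousOn (fun ρ : ℝ => φ ρ * (1 + ρ) ^ β) (Set.uIcc 0 1) := by
    refine hφ.mul (ContinuousOn.rpow_const (by fun_prop) (fun x hx => Or.inl ?_))
    rw [Set.uIcc_of_le (by norm_num : (0:ℝ) ≤ 1)] at hx
    nlinarith [hx.1]
  have h2 := h1.continuousOn_mul hc
  rw [intervalIntegrable_iff] at h2 ⊢
  refine h2.congr_fun (fun x hx => ?_) measurableSet_uIoc
  rw [Set.uIoc_of_le (by norm_num : (0:ℝ) ≤ 1)] at hx
  have e : 1 - x ^ 2 = (1 + x) * (1 - x) := by ring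
  rw [e, Real.mul_rpow (by linarith [hx.1]) (by linarith [hx.2])]
  ring

lemma int_even_rpow {m : ℕ} (hm : 1 ≤ m) {β : ℝ} (hβ : -1 < β) :
    ∫ ρ in (0:ℝ)..1, ρ ^ (2*m) * (1 - ρ^2) ^ β
      = 1/2 * (Real.Gamma ((m:ℝ) + 1/2) * Real.Gamma (β+1)
          / Real.Gamma ((m:ℝ) + 1/2 + (β+1))) := by
  set u : ℝ := (m:ℝ) + 1/2 with hu_def
  set v : ℝ := β + 1 with hv_def
  have hu : 0 < u := by positivity
  have hv : 0 < v := by simp only [hv_def]; linarith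
  set g : ℝ → ℝ := fun t => t ^ (u-1) * (1-t) ^ (v-1) with hg_def
  have hpt : ∀ x ∈ Set.Icc (0:ℝ) 1, x ^ (2*m) * (1 - x^2) ^ β = 1/2 * ((2*x) • g (x^2)) := by
    intro x hx
    rcases eq_or_lt_of_le hx.1 with h0 | h0
    · rw [← h0]
      rw [zero_pow (by omega : 2*m ≠ 0)]
      simp
    · have hx2 : (x:ℝ)^2 = x ^ ((2:ℕ):ℝ) := by rw [Real.rpow_natCast]
      have e1 : (x^2 : ℝ) ^ (u - 1) = x ^ (((2*m : ℕ):ℝ) - 1) := by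
        rw [hx2, ← Real.rpow_mul h0.le]
        congr 1
        push_cast
        rw [hu_def]; ring
      have e2 : x ^ (((2*m : ℕ):ℝ) - 1) = x ^ (2*m - 1 : ℕ) := by
        rw [← Real.rpow_natCast x (2*m-1)]
        congr 1
        have h1 : 1 ≤ 2*m := by omega
        push_cast [h1]
        ring
      have e3 : x * x ^ (2*m-1 : ℕ) = x ^ (2*m) := by
        rw [← pow_succ']
        congr 1
        omega
      simp only [smul_eq_mul, hg_def]
      rw [e1, e2, show v - 1 = β by rw [hv_def]; ring, ← e3]
      ring
  have hint : IntervalIntegrable (fun x : ℝ => 2 * (x ^ (2*m) * (1 - x^2) ^ β)) volume 0 1 := by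
    have h := intInt (φ := fun x : ℝ => 2 * x ^ (2*m)) (by fun_prop) hβ
    refine h.congr ?_
    intro x _
    dsimp only
    ring
  have hbeta := betaReal_integrable hu hv
  have hbetaIcc : IntegrableOn g (Set.Icc (0:ℝ) 1) volume := by
    rw [integrableOn_Icc_iff_integrableOn_Ioc]
    have h1 := hbeta.1
    simpa using h1
  have himg : (fun x : ℝ => x^2) '' Set.uIcc 0 1 ⊆ Set.Icc (0:ℝ) 1 := by
    rintro _ ⟨x, hx, rfl⟩
    rw [Set.uIcc_of_le (by norm_num : (0:ℝ) ≤ 1)] at hx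
    refine ⟨by positivity, ?_⟩
    show x^2 ≤ 1
    nlinarith [hx.1, hx.2]
  have key := intervalIntegral.integral_comp_smul_deriv''' (a := (0:ℝ)) (b := 1)
    (f := fun x => x^2) (f' := fun x => 2*x) (g := g)
    (by fun_prop)
    (fun x hx => by
      simpa using ((hasDerivAt_pow 2 x).congr_deriv (by ring)).hasDerivWithinAt)
    (by
      have hsub : (fun x : ℝ => x^2) '' Set.Ioo (min (0:ℝ) 1) (max (0:ℝ) 1)
          ⊆ Set.Ioo (0:ℝ) 1 := by
        rintro _ ⟨x, hx, rfl⟩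
        rw [min_eq_left zero_le_one, max_eq_right zero_le_one] at hx
        refine ⟨pow_pos hx.1 2, ?_⟩
        show x^2 < 1
        nlinarith [hx.1, hx.2]
      refine ContinuousOn.mono ?_ hsub
      exact (ContinuousOn.rpow_const (by fun_prop) fun t ht => Or.inl ht.1.ne').mul
        (ContinuousOn.rpow_const (by fun_prop) fun t ht => Or.inl
          (by have h2 := ht.2; intro h; nlinarith [sub_eq_zero.mp h])))
    (hbetaIcc.mono_set himg)
    (by
      rw [Set.uIcc_of_le (by norm_num : (0:ℝ) ≤ 1), integrableOn_Icc_iff_integrableOn_Ioc]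
      have h1 : IntegrableOn (fun x : ℝ => 2 * (x ^ (2*m) * (1 - x^2) ^ β))
          (Set.Ioc (0:ℝ) 1) volume := by simpa using hint.1
      refine h1.congr_fun (fun x hx => ?_) measurableSet_Ioc
      have hx' : x ∈ Set.Icc (0:ℝ) 1 := ⟨hx.1.le, hx.2⟩
      have h2 := hpt x hx'
      simp only [smul_eq_mul, Function.comp] at h2 ⊢
      linarith [h2])
  rw [intervalIntegral.integral_congr (g := fun x : ℝ => 1/2 * ((2*x) • g (x^2)))
      (by rw [Set.uIcc_of_le (by norm_num : (0:ℝ) ≤ 1)]; exact fun x hx => hpt x hx),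
    intervalIntegral.integral_const_mul]
  have h3 : ∫ x in (0:ℝ)..1, (2*x) • g (x^2) = ∫ t in (0:ℝ)..1, g t := by
    have e0 : (fun x : ℝ => x^2) 0 = 0 := by norm_num
    have e1 : (fun x : ℝ => x^2) 1 = 1 := by norm_num
    simp only [ne_eq, OfNat.ofNat_ne_zero, not_false_eq_true, zero_pow, one_pow, Function.comp_apply] at key
    exact key
  rw [h3, hg_def]
  rw [betaReal_eq hu hv]

lemma Gamma_shift (x : ℝ) (hx : 0 < x) (m : ℕ) :
    Real.Gamma (x + m) = (∏ i ∈ Finset.range m, (x + i)) * Real.Gamma x := by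
  induction m with
  | zero => simp
  | succ n ih =>
    have hxn : x + n ≠ 0 := by positivity
    have e : x + ((n+1 : ℕ) : ℝ) = (x + n) + 1 := by push_cast; ring
    rw [e, Real.Gamma_add_one hxn, ih, Finset.prod_range_succ]
    push_cast
    ring

lemma prod_desc (c : ℝ) (m : ℕ) :
    ∏ i ∈ Finset.range m, (c - i) = ∏ i ∈ Finset.range m, (c - ((m-1:ℕ):ℝ) + i) := by
  rw [← Finset.prod_range_reflect (fun i => c - ((m-1:ℕ):ℝ) + i) m]
  apply Finset.prod_congr rfl
  intro i hi
  rw [Finset.mem_range] at hi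
  have h1 : m - 1 - i ≤ m - 1 := Nat.sub_le _ _
  have h2 : i ≤ m - 1 := by omega
  have : ((m - 1 - i : ℕ) : ℝ) = ((m-1:ℕ):ℝ) - i := by
    push_cast [Nat.cast_sub h2]
    ring
  rw [this]
  ring

lemma prod_k_sub {k p : ℕ} (hpk : p ≤ k) :
    ∏ i ∈ Finset.range p, ((k:ℝ) - i)
      = (k.factorial : ℝ) / ((k-p).factorial : ℝ) := by
  induction p with
  | zero => rw [Nat.sub_zero]; simp [div_self, Nat.factorial_ne_zero]
  | succ q ih =>
    have hq : q ≤ k := by omega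
    rw [Finset.prod_range_succ, ih hq]
    have ha : ((k-q).factorial : ℝ) ≠ 0 := by positivity
    have hb : ((k-(q+1)).factorial : ℝ) ≠ 0 := by positivity
    rw [div_mul_eq_mul_div, div_eq_div_iff ha hb]
    have hfac : ((k - q).factorial : ℝ) = ((k:ℝ) - q) * ((k - (q+1)).factorial : ℝ) := by
      have e : (k - q) = (k - (q+1)) + 1 := by omega
      rw [e, Nat.factorial_succ]
      have e2 : ((k - (q+1) : ℕ) : ℝ) + 1 = (k:ℝ) - q := by
        push_cast [Nat.cast_sub hpk]
        ring
      push_cast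
      rw [e2]
    rw [hfac]
    ring

lemma alt_sum_choose_zero {n : ℕ} (hn : n ≠ 0) :
    ∑ j ∈ Finset.range (n+1), (-1:ℝ)^j * (n.choose j : ℝ) = 0 := by
  have h := Int.alternating_sum_range_choose_of_ne hn
  have : ((∑ i ∈ Finset.range (n+1), (-1:ℤ)^i * (n.choose i) : ℤ) : ℝ) = 0 := by
    rw [h]; norm_num
  push_cast at this
  convert this using 2

lemma diffRising (p : ℕ) : ∀ (k : ℕ) (c : ℝ),
    ∑ j ∈ Finset.range (p+1), (-1:ℝ)^j * ((p.choose j : ℕ) : ℝ)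
        * ∏ i ∈ Finset.range k, (c - j + i)
    = (∏ i ∈ Finset.range p, ((k:ℝ) - i)) * ∏ i ∈ Finset.range (k - p), (c + i) := by
  induction p with
  | zero => intro k c; simp
  | succ p ih =>
    intro k c
    match k with
    | 0 =>
      simp only [Finset.range_zero, Finset.prod_empty, mul_one, Nat.zero_sub]
      rw [alt_sum_choose_zero (Nat.succ_ne_zero p)]
      rw [Finset.prod_eq_zero (Finset.mem_range.mpr (Nat.succ_pos p)) (by norm_num)]
    | (k+1) =>
      set F : ℕ → ℝ := fun j => ∏ i ∈ Finset.range (k+1), (c - j + i) with hF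
      have hA : ∑ j ∈ Finset.range (p+2), (-1:ℝ)^j * (((p+1).choose j : ℕ) : ℝ) * F j
          = ∑ j ∈ Finset.range (p+1), (-1:ℝ)^j * ((p.choose j : ℕ) : ℝ)
              * (F j - F (j+1)) := by
        calc ∑ j ∈ Finset.range (p+2), (-1:ℝ)^j * (((p+1).choose j : ℕ) : ℝ) * F j
            = (∑ j ∈ Finset.range (p+1),
                (-1:ℝ)^(j+1) * (((p+1).choose (j+1) : ℕ) : ℝ) * F (j+1))
                + (-1:ℝ)^0 * (((p+1).choose 0 : ℕ) : ℝ) * F 0 :=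
              Finset.sum_range_succ' _ _
          _ = (∑ j ∈ Finset.range (p+1), ((-1:ℝ)^(j+1) * ((p.choose (j+1) : ℕ) : ℝ) * F (j+1)
                - (-1:ℝ)^j * ((p.choose j : ℕ) : ℝ) * F (j+1)))
                + (-1:ℝ)^0 * ((p.choose 0 : ℕ) : ℝ) * F 0 := by
              have h1 : ∀ j ∈ Finset.range (p+1),
                  (-1:ℝ)^(j+1) * (((p+1).choose (j+1) : ℕ) : ℝ) * F (j+1)
                  = (-1:ℝ)^(j+1) * ((p.choose (j+1) : ℕ) : ℝ) * F (j+1)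
                    - (-1:ℝ)^j * ((p.choose j : ℕ) : ℝ) * F (j+1) := by
                intro j hj
                have hch : (((p+1).choose (j+1) : ℕ) : ℝ)
                    = ((p.choose j : ℕ) : ℝ) + ((p.choose (j+1) : ℕ) : ℝ) := by
                  rw [Nat.choose_succ_succ]
                  push_cast
                  ring
                rw [hch]; ring
              rw [Finset.sum_congr rfl h1]
              norm_num
          _ = ((∑ j ∈ Finset.range (p+1), (-1:ℝ)^(j+1) * ((p.choose (j+1) : ℕ) : ℝ) * F (j+1))
                + (-1:ℝ)^0 * ((p.choose 0 : ℕ) : ℝ) * F 0)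
              - ∑ j ∈ Finset.range (p+1), (-1:ℝ)^j * ((p.choose j : ℕ) : ℝ) * F (j+1) := by
              rw [Finset.sum_sub_distrib]; ring
          _ = (∑ j ∈ Finset.range (p+2), (-1:ℝ)^j * ((p.choose j : ℕ) : ℝ) * F j)
              - ∑ j ∈ Finset.range (p+1), (-1:ℝ)^j * ((p.choose j : ℕ) : ℝ) * F (j+1) := by
              rw [Finset.sum_range_succ' (fun j => (-1:ℝ)^j * ((p.choose j : ℕ) : ℝ) * F j) (p+1)]
          _ = (∑ j ∈ Finset.range (p+1), (-1:ℝ)^j * ((p.choose j : ℕ) : ℝ) * F j)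
              - ∑ j ∈ Finset.range (p+1), (-1:ℝ)^j * ((p.choose j : ℕ) : ℝ) * F (j+1) := by
              rw [Finset.sum_range_succ]
              simp [Nat.choose_succ_self]
          _ = ∑ j ∈ Finset.range (p+1), (-1:ℝ)^j * ((p.choose j : ℕ) : ℝ) * (F j - F (j+1)) := by
              rw [← Finset.sum_sub_distrib]
              apply Finset.sum_congr rfl
              intros; ring
      have hdiff : ∀ j : ℕ, F j - F (j+1) = (k+1 : ℝ) * ∏ i ∈ Finset.range k, (c - j + i) := by
        intro j
        have e1 : F j = (∏ i ∈ Finset.range k, (c - j + i)) * (c - j + k) :=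
          Finset.prod_range_succ _ _
        have e2 : F (j+1) = (∏ i ∈ Finset.range k, (c - j + i)) * (c - j - 1) := by
          rw [hF]
          simp only []
          rw [Finset.prod_range_succ']
          have e3 : ∀ i ∈ Finset.range k, (c - ((j+1:ℕ):ℝ) + ((i+1:ℕ):ℝ)) = c - j + i := by
            intro i _; push_cast; ring
          rw [Finset.prod_congr rfl e3]
          push_cast
          ring
        rw [e1, e2]
        push_cast
        ring
      rw [hA]
      calc ∑ j ∈ Finset.range (p+1), (-1:ℝ)^j * ((p.choose j : ℕ) : ℝ) * (F j - F (j+1))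
          = (k+1 : ℝ) * ∑ j ∈ Finset.range (p+1), (-1:ℝ)^j * ((p.choose j : ℕ) : ℝ)
              * ∏ i ∈ Finset.range k, (c - j + i) := by
            rw [Finset.mul_sum]
            apply Finset.sum_congr rfl
            intro j hj
            rw [hdiff j]; ring
        _ = (k+1 : ℝ) * ((∏ i ∈ Finset.range p, ((k:ℝ) - i))
              * ∏ i ∈ Finset.range (k - p), (c + i)) := by rw [ih k c]
        _ = (∏ i ∈ Finset.range (p+1), (((k+1:ℕ):ℝ) - i))
              * ∏ i ∈ Finset.range ((k+1) - (p+1)), (c + i) := by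
            rw [Nat.succ_sub_succ]
            rw [Finset.prod_range_succ' (fun i => (((k+1:ℕ):ℝ) - i)) p]
            have e4 : ∀ i ∈ Finset.range p, (((k+1:ℕ):ℝ) - ((i+1:ℕ):ℝ)) = (k:ℝ) - i := by
              intro i _; push_cast; ring
            rw [Finset.prod_congr rfl e4]
            push_cast
            ring


/-- the moments `J_{nk}^{l,α} = ∫₀¹ ρ^{l+2k+2} R_n^{l,α}(ρ) dρ`, `n = l + 2p`. -/
theorem stmt2 (α : ℝ) (hα : -1 < α) (l p k : ℕ) :
    (k < p → ∫ ρ in (0:ℝ)..1, ρ ^ (l + 2 * k + 2) * R3 α l p ρ = 0) ∧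
    (p ≤ k → ∫ ρ in (0:ℝ)..1, ρ ^ (l + 2 * k + 2) * R3 α l p ρ
      = 1 / 2 * ((Nat.factorial k : ℝ) / ((Nat.factorial (k - p) : ℝ) * (Nat.factorial p : ℝ)))
        * Real.Gamma ((p : ℝ) + α + 1) * Real.Gamma ((k : ℝ) + (l : ℝ) + 3 / 2)
        / Real.Gamma ((k : ℝ) + (l : ℝ) + (p : ℝ) + α + 5 / 2)) := by
  have hc : (0:ℝ) < (p:ℝ) + (l:ℝ) + 3/2 := by positivity
  set c : ℝ := (p:ℝ) + (l:ℝ) + 3/2 with hcdef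
  set D : ℝ := (k:ℝ) + (l:ℝ) + (p:ℝ) + α + 5/2 with hDdef
  have hD : 0 < D := by
    rw [hDdef]
    have h1 : (0:ℝ) ≤ k := Nat.cast_nonneg k
    have h2 : (0:ℝ) ≤ l := Nat.cast_nonneg l
    have h3 : (0:ℝ) ≤ p := Nat.cast_nonneg p
    linarith
  set K : ℝ := Real.Gamma ((p:ℝ) + α + 1) * Real.Gamma c
      / (2 * (p.factorial : ℝ) * Real.Gamma D) with hKdef
  set B : ℕ → ℝ := fun j =>
    genBinom ((p:ℝ) + α) (p - j) * genBinom ((p:ℝ) + ((l:ℝ) + 1/2)) j with hB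
  set g : ℕ → ℝ → ℝ := fun j ρ =>
    (B j * (ρ^(l+2*k+2) * ρ^l * (ρ^2-1)^j * (ρ^2)^(p-j))) * (1-ρ^2)^α with hg
  have hexp : ∀ ρ : ℝ, ρ ^ (l + 2*k + 2) * R3 α l p ρ
      = ∑ j ∈ Finset.range (p+1), g j ρ := by
    intro ρ
    simp only [R3, jacobiP, Finset.mul_sum]
    apply Finset.sum_congr rfl
    intro j hj
    simp only [hg, hB]
    have hb1 : (2*ρ^2 - 1 - 1)/2 = ρ^2 - 1 := by ring
    have hb2 : (2*ρ^2 - 1 + 1)/2 = ρ^2 := by ring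
    rw [hb1, hb2]
    ring
  have hInt : ∀ j ∈ Finset.range (p+1), IntervalIntegrable (g j) volume 0 1 := by
    intro j hj
    simp only [hg]
    exact intInt (φ := fun ρ => B j * (ρ^(l+2*k+2) * ρ^l * (ρ^2-1)^j * (ρ^2)^(p-j)))
      (by fun_prop) hα
  have step1 : ∫ ρ in (0:ℝ)..1, ρ ^ (l + 2*k + 2) * R3 α l p ρ
      = ∑ j ∈ Finset.range (p+1), ∫ ρ in (0:ℝ)..1, g j ρ := by
    rw [intervalIntegral.integral_congr
      (g := fun ρ => ∑ j ∈ Finset.range (p+1), g j ρ) (fun ρ _ => hexp ρ)]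
    exact intervalIntegral.integral_finset_sum hInt
  have step2 : ∀ j ∈ Finset.range (p+1), ∫ ρ in (0:ℝ)..1, g j ρ
      = (B j * (-1:ℝ)^j) * (1/2 * (Real.Gamma (((l+k+1+(p-j) : ℕ):ℝ) + 1/2)
          * Real.Gamma ((α + (j:ℝ)) + 1)
          / Real.Gamma (((l+k+1+(p-j) : ℕ):ℝ) + 1/2 + ((α + (j:ℝ)) + 1)))) := by
    intro j hj
    rw [Finset.mem_range] at hj
    have hjp : j ≤ p := by omega
    have hEq : Set.EqOn (g j)
        (fun ρ => (B j * (-1:ℝ)^j) * (ρ^(2*(l+k+1+(p-j))) * (1-ρ^2)^(α + (j:ℝ))))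
        (Set.uIcc 0 1) := by
      intro ρ hρ
      rw [Set.uIcc_of_le (by norm_num : (0:ℝ) ≤ 1)] at hρ
      have hpow : ρ^(l+2*k+2) * ρ^l * (ρ^2)^(p-j) = ρ^(2*(l+k+1+(p-j))) := by
        rw [← pow_mul, ← pow_add, ← pow_add]
        congr 1
        omega
      have hneg : (ρ^2 - 1 : ℝ)^j = (-1:ℝ)^j * (1-ρ^2)^j := by
        rw [show (ρ^2 - 1 : ℝ) = -(1-ρ^2) by ring, neg_pow]
      have hmerge : (1-ρ^2 : ℝ)^(j:ℕ) * (1-ρ^2)^α = (1-ρ^2)^(α + (j:ℝ)) := by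
        rcases Nat.eq_zero_or_pos j with h0 | h0
        · subst h0; norm_num
        · have hbase : (0:ℝ) ≤ 1 - ρ^2 := by nlinarith [hρ.1, hρ.2]
          have hsum : (j:ℝ) + α ≠ 0 := by
            have h1 : (1:ℝ) ≤ (j:ℝ) := by exact_mod_cast h0
            have : (0:ℝ) < (j:ℝ) + α := by linarith
            exact this.ne'
          rw [← Real.rpow_natCast (1-ρ^2) j, ← Real.rpow_add' hbase hsum, add_comm (j:ℝ) α]
      calc g j ρ
          = (B j * (-1:ℝ)^j) * ((ρ^(l+2*k+2) * ρ^l * (ρ^2)^(p-j))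
              * ((1-ρ^2)^j * (1-ρ^2)^α)) := by
            simp only [hg]; rw [hneg]; ring
        _ = (B j * (-1:ℝ)^j) * (ρ^(2*(l+k+1+(p-j))) * (1-ρ^2)^(α + (j:ℝ))) := by
            rw [hpow, hmerge]
    rw [intervalIntegral.integral_congr hEq, intervalIntegral.integral_const_mul]
    have hval := int_even_rpow (m := l+k+1+(p-j)) (by omega) (β := α + (j:ℝ))
      (by have : (0:ℝ) ≤ j := Nat.cast_nonneg j; linarith)
    rw [hval]
  have step3 : ∀ j ∈ Finset.range (p+1),
      (B j * (-1:ℝ)^j) * (1/2 * (Real.Gamma (((l+k+1+(p-j) : ℕ):ℝ) + 1/2)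
          * Real.Gamma ((α + (j:ℝ)) + 1)
          / Real.Gamma (((l+k+1+(p-j) : ℕ):ℝ) + 1/2 + ((α + (j:ℝ)) + 1))))
      = K * ((-1:ℝ)^j * ((p.choose j : ℕ) : ℝ) * ∏ i ∈ Finset.range k, (c - (j:ℝ) + i)) := by
    intro j hj
    rw [Finset.mem_range] at hj
    have hjp : j ≤ p := by omega
    have hjc : ((j:ℝ)) ≤ (p:ℝ) := by exact_mod_cast hjp
    have hMcast : (((l+k+1+(p-j) : ℕ)):ℝ) + 1/2 = c - (j:ℝ) + (k:ℝ) := by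
      push_cast [Nat.cast_sub hjp]
      rw [hcdef]; ring
    have hDcast : (((l+k+1+(p-j) : ℕ)):ℝ) + 1/2 + ((α + (j:ℝ)) + 1) = D := by
      push_cast [Nat.cast_sub hjp]
      rw [hDdef]; ring
    have hcj : (0:ℝ) < c - (j:ℝ) := by rw [hcdef]; linarith
    have hvj : (0:ℝ) < α + (j:ℝ) + 1 := by
      have : (0:ℝ) ≤ j := Nat.cast_nonneg j; linarith
    have hGu : Real.Gamma (c - (j:ℝ) + (k:ℝ))
        = (∏ i ∈ Finset.range k, (c - (j:ℝ) + i)) * Real.Gamma (c - (j:ℝ)) :=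
      Gamma_shift _ hcj k
    have hgbA : genBinom ((p:ℝ) + α) (p - j) * Real.Gamma (α + (j:ℝ) + 1)
        = Real.Gamma ((p:ℝ) + α + 1) / ((p-j).factorial : ℝ) := by
      rw [genBinom]
      have h1 : ∏ i ∈ Finset.range (p-j), ((p:ℝ) + α - i)
          = ∏ i ∈ Finset.range (p-j), ((α + (j:ℝ) + 1) + i) := by
        rw [prod_desc ((p:ℝ) + α) (p-j)]
        apply Finset.prod_congr rfl
        intro i hi
        rw [Finset.mem_range] at hi
        have h1' : 1 ≤ p - j := by omega
        have h2 : ((p - j - 1 : ℕ) : ℝ) = (p:ℝ) - j - 1 := by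
          push_cast [Nat.cast_sub (by omega : j + 1 ≤ p)]
          have : p - j - 1 = p - (j+1) := by omega
          rw [this]
          push_cast [Nat.cast_sub (by omega : j + 1 ≤ p)]
          ring
        rw [h2]
        ring
      have h3 := Gamma_shift (α + (j:ℝ) + 1) hvj (p-j)
      have h4 : α + (j:ℝ) + 1 + ((p-j : ℕ):ℝ) = (p:ℝ) + α + 1 := by
        push_cast [Nat.cast_sub hjp]; ring
      rw [h4] at h3
      rw [div_mul_eq_mul_div, h1, ← h3]
    have hgbB : genBinom ((p:ℝ) + ((l:ℝ) + 1/2)) j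
        = Real.Gamma c / (Real.Gamma (c - (j:ℝ)) * (j.factorial : ℝ)) := by
      rw [genBinom]
      have h1 : ∏ i ∈ Finset.range j, ((p:ℝ) + ((l:ℝ) + 1/2) - i)
          = ∏ i ∈ Finset.range j, ((c - (j:ℝ)) + i) := by
        rw [prod_desc ((p:ℝ) + ((l:ℝ) + 1/2)) j]
        apply Finset.prod_congr rfl
        intro i hi
        rw [Finset.mem_range] at hi
        have h2 : ((j - 1 : ℕ) : ℝ) = (j:ℝ) - 1 := by
          push_cast [Nat.cast_sub (by omega : 1 ≤ j)]
          ring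
        rw [h2, hcdef]
        ring
      have h3 := Gamma_shift (c - (j:ℝ)) hcj j
      have h4 : c - (j:ℝ) + ((j:ℕ):ℝ) = c := by ring
      rw [h4] at h3
      have hGcj : Real.Gamma (c - (j:ℝ)) ≠ 0 := (Real.Gamma_pos_of_pos hcj).ne'
      rw [h1, h3]
      field_simp
    have hch : ((p.choose j : ℕ) : ℝ)
        = (p.factorial : ℝ) / ((j.factorial : ℝ) * ((p-j).factorial : ℝ)) :=
      Nat.cast_choose ℝ hjp
    rw [hDcast, hMcast, hGu]
    calc (B j * (-1:ℝ)^j) * (1/2 * ((∏ i ∈ Finset.range k, (c - (j:ℝ) + i))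
            * Real.Gamma (c - (j:ℝ)) * Real.Gamma ((α + (j:ℝ)) + 1) / Real.Gamma D))
        = (genBinom ((p:ℝ) + α) (p - j) * Real.Gamma (α + (j:ℝ) + 1))
            * genBinom ((p:ℝ) + ((l:ℝ) + 1/2)) j
            * ((-1:ℝ)^j * (1/2) * (∏ i ∈ Finset.range k, (c - (j:ℝ) + i))
              * Real.Gamma (c - (j:ℝ)) / Real.Gamma D) := by
          simp only [hB]
          ring
      _ = (Real.Gamma ((p:ℝ) + α + 1) / ((p-j).factorial : ℝ))
            * (Real.Gamma c / (Real.Gamma (c - (j:ℝ)) * (j.factorial : ℝ)))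
            * ((-1:ℝ)^j * (1/2) * (∏ i ∈ Finset.range k, (c - (j:ℝ) + i))
              * Real.Gamma (c - (j:ℝ)) / Real.Gamma D) := by
          rw [hgbA, hgbB]
      _ = K * ((-1:ℝ)^j * ((p.choose j : ℕ) : ℝ)
            * ∏ i ∈ Finset.range k, (c - (j:ℝ) + i)) := by
          rw [hch, hKdef]
          have hGcj : Real.Gamma (c - (j:ℝ)) ≠ 0 := (Real.Gamma_pos_of_pos hcj).ne'
          have hGD : Real.Gamma D ≠ 0 := (Real.Gamma_pos_of_pos hD).ne'
          have hf1 : ((p-j).factorial : ℝ) ≠ 0 := by positivity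
          have hf2 : ((j).factorial : ℝ) ≠ 0 := by positivity
          have hf3 : ((p).factorial : ℝ) ≠ 0 := by positivity
          field_simp
  have main : ∫ ρ in (0:ℝ)..1, ρ ^ (l + 2*k + 2) * R3 α l p ρ
      = K * ((∏ i ∈ Finset.range p, ((k:ℝ) - i)) * ∏ i ∈ Finset.range (k-p), (c + i)) := by
    rw [step1, Finset.sum_congr rfl (fun j hj => (step2 j hj).trans (step3 j hj)),
      ← Finset.mul_sum, diffRising p k c]
  constructor
  · intro hkp
    rw [main, Finset.prod_eq_zero (Finset.mem_range.mpr hkp) (by norm_num)]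
    ring
  · intro hpk
    rw [main, prod_k_sub hpk]
    have hGc : Real.Gamma c * ∏ i ∈ Finset.range (k-p), (c + i)
        = Real.Gamma ((k:ℝ) + (l:ℝ) + 3/2) := by
      rw [mul_comm, ← Gamma_shift c hc (k-p)]
      congr 1
      push_cast [Nat.cast_sub hpk]
      rw [hcdef]; ring
    rw [← hGc, hKdef]
    have hGD : Real.Gamma D ≠ 0 := (Real.Gamma_pos_of_pos hD).ne'
    have hf1 : ((k-p).factorial : ℝ) ≠ 0 := by positivity
    have hf3 : ((p).factorial : ℝ) ≠ 0 := by positivity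
    field_simp
end

section
/- Let l, p be integers ≥ 0, n = l + 2p, and 0 ≤ ε ≤ 1. Then for every 0 ≤ ρ ≤ 1, R_n^{l,0}(ερ) = Σ_{n' = l, l+2, …, n} ( R_n^{n',0}(ε) − R_n^{n'+2,0}(ε) ) R_{n'}^{l,0}(ρ), where the term R_n^{n+2,0} occurring for n' = n is interpreted as 0; equivalently, the scaling coefficients C_{nn'}^{l,0}(ε) vanish for all n' = n+2, n+4, …. -/
open Real MeasureTheory

section Stmt7Aux
open Finset

lemma fact_ne (n : ℕ) : ((Nat.factorial n : ℕ) : ℝ) ≠ 0 := by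
  exact_mod_cast (Nat.factorial_ne_zero n)

lemma genBinom_zero' (a : ℝ) : genBinom a 0 = 1 := by simp [genBinom]

lemma genBinom_succ_mul (a : ℝ) (n : ℕ) :
    genBinom a (n+1) * (n+1) = genBinom a n * (a - n) := by
  simp only [genBinom, Finset.prod_range_succ, Nat.factorial_succ]
  have h1 := fact_ne n
  have h2 : ((n:ℝ)+1) ≠ 0 := by positivity
  field_simp
  push_cast; ring

lemma prod_shift (x : ℝ) (n : ℕ) :
    (∏ j ∈ Finset.range (n+1), (x + 1 - (j:ℕ))) = (x+1) * ∏ j ∈ Finset.range n, (x - (j:ℕ)) := by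
  rw [Finset.prod_range_succ']
  have h0 : (x + 1 - ((0:ℕ):ℝ)) = x + 1 := by norm_num
  rw [h0, mul_comm]
  congr 1
  apply Finset.prod_congr rfl
  intro i _
  push_cast
  ring

lemma genBinom_pascal (x : ℝ) (n : ℕ) :
    genBinom (x+1) (n+1) = genBinom x (n+1) + genBinom x n := by
  have h1 := fact_ne n
  have h2 : ((n:ℝ)+1) ≠ 0 := by positivity
  simp only [genBinom, Nat.factorial_succ]
  rw [prod_shift, Finset.prod_range_succ]
  push_cast
  field_simp
  ring
lemma genBinom_nat (n k : ℕ) : genBinom ((n:ℕ):ℝ) k = (n.choose k : ℝ) := by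
  induction k with
  | zero => simp [genBinom_zero']
  | succ k ih =>
    have h2 : ((k:ℝ)+1) ≠ 0 := by positivity
    have hm := genBinom_succ_mul ((n:ℕ):ℝ) k
    rw [ih] at hm
    have key : (n.choose (k+1) : ℝ) * ((k:ℝ)+1) = (n.choose k : ℝ) * ((n:ℝ) - k) := by
      rcases le_or_gt k n with h | h
      · have hnn := Nat.choose_succ_right_eq n k
        have hc : ((n.choose (k+1):ℝ)) * ((k:ℝ)+1) = (n.choose k : ℝ) * (((n - k : ℕ)):ℝ) := by
          exact_mod_cast hnn
        rw [Nat.cast_sub h] at hc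
        push_cast
        push_cast at hc
        linarith [hc]
      · have h1 : n.choose (k+1) = 0 := Nat.choose_eq_zero_of_lt (by omega)
        have h0 : n.choose k = 0 := Nat.choose_eq_zero_of_lt h
        simp [h1, h0]
    have : genBinom ((n:ℕ):ℝ) (k+1) * ((k:ℝ)+1) = (n.choose (k+1) : ℝ) * ((k:ℝ)+1) := by
      rw [key]
      exact hm
    exact mul_right_cancel₀ h2 this

lemma genBinom_vandermonde (m : ℕ) : ∀ (y : ℝ) (p : ℕ),
    genBinom (y + (m:ℕ)) p = ∑ k ∈ Finset.range (p+1), (m.choose k : ℝ) * genBinom y (p - k) := by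
  induction m with
  | zero =>
    intro y p
    rw [Finset.sum_eq_single 0]
    · simp [genBinom]
    · intro b _ hb
      simp [Nat.choose_eq_zero_of_lt (by omega : (0:ℕ) < b)]
    · intro h; simp at h
  | succ m ih =>
    intro y p
    have h1 : y + ((m+1 : ℕ):ℝ) = (y+1) + (m:ℕ) := by push_cast; ring
    rw [h1, ih]
    -- key identity E
    have E1 := Finset.sum_range_succ (fun k => (m.choose k : ℝ) * genBinom y (p - k)) p
    have E2 := Finset.sum_range_succ' (fun k => (m.choose k : ℝ) * genBinom y (p - k)) p
    rw [E1] at E2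
    -- expand LHS with pascal on k < p
    rw [Finset.sum_range_succ]
    have hps : ∀ k ∈ Finset.range p, (m.choose k:ℝ) * genBinom (y+1) (p-k)
        = (m.choose k:ℝ) * genBinom y (p-k) + (m.choose k:ℝ) * genBinom y (p-k-1) := by
      intro k hk
      have hk' : k < p := Finset.mem_range.mp hk
      have hh : p - k = (p - k - 1) + 1 := by omega
      rw [hh, genBinom_pascal]
      have hh2 : p - k - 1 + 1 - 1 = p - k - 1 := by omega
      rw [hh2]
      ring
    rw [Finset.sum_congr rfl hps, Finset.sum_add_distrib]
    -- expand RHS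
    rw [Finset.sum_range_succ' (fun k => ((m+1).choose k : ℝ) * genBinom y (p - k)) p]
    have hcs : ∀ k, ((m+1).choose (k+1) : ℝ) = (m.choose k : ℝ) + (m.choose (k+1) : ℝ) := by
      intro k; rw [Nat.choose_succ_succ]; push_cast; ring
    have hrw : ∀ k ∈ Finset.range p, ((m+1).choose (k+1) : ℝ) * genBinom y (p - (k+1))
        = (m.choose k : ℝ) * genBinom y (p-k-1) + (m.choose (k+1) : ℝ) * genBinom y (p - (k+1)) := by
      intro k _
      rw [hcs k]
      have : p - (k+1) = p - k - 1 := by omega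
      rw [this]; ring
    rw [Finset.sum_congr rfl hrw, Finset.sum_add_distrib]
    simp only [Nat.sub_self, Nat.sub_zero, genBinom_zero', Nat.choose_zero_right,
      Nat.cast_one, one_mul, mul_one] at E2 ⊢
    linarith [E2]
noncomputable def cc (b : ℝ) (p m : ℕ) : ℝ :=
  (-1)^(p+m) * (p.choose m : ℝ) * genBinom ((p:ℝ) + (m:ℕ) + b) p

lemma cc_eq_zero (b : ℝ) (p m : ℕ) (h : p < m) : cc b p m = 0 := by
  simp [cc, Nat.choose_eq_zero_of_lt h]

lemma neg_one_pow_sub (p k : ℕ) (h : k ≤ p) : ((-1:ℝ))^(p-k) = (-1)^(p+k) := by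
  have hh : p + k = (p - k) + 2*k := by omega
  rw [hh, pow_add, pow_mul, neg_one_sq, one_pow, mul_one]

lemma jacobi_expand (b x : ℝ) (p : ℕ) :
    jacobiP p 0 b (2*x - 1) = ∑ m ∈ Finset.range (p+1), cc b p m * x^m := by
  -- rewrite RHS
  have hvand : ∀ m : ℕ, cc b p m * x^m
      = ∑ k ∈ Finset.range (p+1),
          (-1:ℝ)^(p+m) * (p.choose m : ℝ) * ((m.choose k : ℝ) * genBinom ((p:ℝ) + b) (p - k)) * x^m := by
    intro m
    rw [cc, show (p:ℝ) + (m:ℕ) + b = ((p:ℝ) + b) + (m:ℕ) by ring,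
      genBinom_vandermonde m ((p:ℝ)+b) p, Finset.mul_sum, Finset.sum_mul]
  rw [Finset.sum_congr rfl (fun m _ => hvand m), Finset.sum_comm]
  -- inner sum over m
  have hinner : ∀ k ∈ Finset.range (p+1),
      (∑ m ∈ Finset.range (p+1),
        (-1:ℝ)^(p+m) * (p.choose m : ℝ) * ((m.choose k : ℝ) * genBinom ((p:ℝ) + b) (p - k)) * x^m)
      = genBinom ((p:ℝ) + b) (p - k) * ((-1:ℝ)^(p+k) * (p.choose k : ℝ) * x^k * (1-x)^(p-k)) := by
    intro k hk
    have hkp : k ≤ p := by simpa [Nat.lt_succ_iff] using hk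
    have hsplit : p + 1 = k + (p - k + 1) := by omega
    rw [hsplit, Finset.sum_range_add]
    have hz : ∀ m ∈ Finset.range k,
        (-1:ℝ)^(p+m) * (p.choose m : ℝ) * ((m.choose k : ℝ) * genBinom ((p:ℝ) + b) (p - k)) * x^m = 0 := by
      intro m hm
      have : m.choose k = 0 := Nat.choose_eq_zero_of_lt (Finset.mem_range.mp hm)
      simp [this]
    rw [Finset.sum_eq_zero hz, zero_add]
    have hterm : ∀ i ∈ Finset.range (p - k + 1),
        (-1:ℝ)^(p+(k+i)) * (p.choose (k+i) : ℝ) * (((k+i).choose k : ℝ) * genBinom ((p:ℝ) + b) (p - k)) * x^(k+i)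
        = (genBinom ((p:ℝ) + b) (p - k) * ((-1:ℝ)^(p+k) * (p.choose k : ℝ) * x^k))
            * (((p-k).choose i : ℝ) * (-x)^i * 1^(p-k-i)) := by
      intro i hi
      have hi' : i ≤ p - k := by simpa [Nat.lt_succ_iff] using hi
      have hmul : p.choose (k+i) * (k+i).choose k = p.choose k * (p - k).choose i := by
        have := Nat.choose_mul (n := p) (show k ≤ k + i by omega)
        simpa using this
      have hcast : ((p.choose (k+i)):ℝ) * ((k+i).choose k : ℝ) = (p.choose k : ℝ) * ((p-k).choose i : ℝ) := by
        exact_mod_cast hmul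
      have hsgn : ((-1:ℝ))^(p+(k+i)) = (-1)^(p+k) * (-1)^i := by rw [← pow_add]; ring_nf
      rw [hsgn, pow_add x k i, one_pow, mul_one,
        show (-x)^i = (-1:ℝ)^i * x^i by rw [neg_pow]]
      linear_combination ((-1:ℝ)^(p+k) * (-1:ℝ)^i * genBinom ((p:ℝ)+b) (p-k) * x^k * x^i) * hcast
    rw [Finset.sum_congr rfl hterm, ← Finset.mul_sum]
    have hbin : (∑ i ∈ Finset.range (p-k+1), ((p-k).choose i : ℝ) * (-x)^i * 1^(p-k-i)) = (1-x)^(p-k) := by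
      have := add_pow (-x) (1:ℝ) (p-k)
      rw [show (-x + 1) = (1 - x) by ring] at this
      rw [this]
      apply Finset.sum_congr rfl
      intro i _
      ring
    rw [hbin]
    ring
  rw [Finset.sum_congr rfl hinner]
  -- now expand jacobiP
  unfold jacobiP
  have hxm : (2*x - 1 - 1)/2 = x - 1 := by ring
  have hxp : (2*x - 1 + 1)/2 = x := by ring
  rw [← Finset.sum_range_reflect (fun k => genBinom ((p:ℝ) + b) (p - k) *
    ((-1:ℝ)^(p+k) * (p.choose k : ℝ) * x^k * (1-x)^(p-k))) (p+1)]
  apply Finset.sum_congr rfl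
  intro j hj
  have hjp : j ≤ p := by simpa [Nat.lt_succ_iff] using hj
  have h1 : p + 1 - 1 - j = p - j := by omega
  rw [h1, hxm, hxp]
  have h2 : p - (p - j) = j := by omega
  rw [h2]
  have h3 : genBinom ((p:ℝ) + 0) (p - j) = (p.choose (p-j) : ℝ) := by
    rw [add_zero, genBinom_nat]
  rw [h3]
  have h4 : ((-1:ℝ))^(p+(p-j)) = (-1)^j := by
    rw [← neg_one_pow_sub p (p-j) (by omega)]
    congr 1
  rw [h4]
  have h5 : (x - 1)^j = (-1:ℝ)^j * (1-x)^j := by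
    rw [show (x-1) = (-1) * (1 - x) by ring, mul_pow]
  rw [h5]
  ring
lemma genBinom_succ_first (x : ℝ) (n : ℕ) :
    genBinom x (n+1) * ((n:ℝ)+1) = x * genBinom (x-1) n := by
  have h1 := fact_ne n
  have h2 : ((n:ℝ)+1) ≠ 0 := by positivity
  simp only [genBinom, Nat.factorial_succ]
  rw [Finset.prod_range_succ']
  have h3 : (∏ i ∈ Finset.range n, (x - ((i+1:ℕ):ℝ))) = ∏ i ∈ Finset.range n, (x - 1 - (i:ℕ)) := by
    apply Finset.prod_congr rfl
    intro i _
    push_cast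
    ring
  rw [h3]
  push_cast
  field_simp
  ring

lemma choose_rel1 (s u : ℕ) :
    ((s:ℝ) + 1 - u) * ((s+1).choose u : ℝ) = ((s:ℝ)+1) * (s.choose u : ℝ) := by
  rcases le_or_gt u (s+1) with h | h
  · have hn : (s+1) * s.choose u = (s+1).choose u * (s+1-u) :=
      (Nat.add_one_mul_choose_eq s u).trans (Nat.choose_succ_right_eq (s+1) u)
    have hc : ((s:ℝ)+1) * (s.choose u : ℝ) = ((s+1).choose u : ℝ) * (((s+1-u:ℕ)):ℝ) := by
      exact_mod_cast hn
    rw [Nat.cast_sub h] at hc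
    push_cast at hc ⊢
    linarith [hc]
  · have h1 : (s+1).choose u = 0 := Nat.choose_eq_zero_of_lt h
    have h0 : s.choose u = 0 := Nat.choose_eq_zero_of_lt (by omega)
    simp [h1, h0]

lemma rel1 (b : ℝ) (u s : ℕ) :
    ((s:ℝ) + 1 - u) * cc b (s+1) u = -(((s:ℝ) + 1 + u) + b) * cc b s u := by
  have h2 : ((s:ℝ)+1) ≠ 0 := by positivity
  apply mul_right_cancel₀ h2
  have e1 : ((s:ℝ) + 1 - u) * cc b (s+1) u * ((s:ℝ)+1)
      = (-1:ℝ)^(s+1+u) * ((((s:ℝ)+1-u) * ((s+1).choose u : ℝ))) *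
        (genBinom (((s+1:ℕ):ℝ) + (u:ℕ) + b) (s+1) * ((s:ℝ)+1)) := by
    rw [cc]; push_cast; ring
  rw [e1, choose_rel1, genBinom_succ_first]
  have e2 : (((s+1:ℕ):ℝ) + (u:ℕ) + b - 1) = ((s:ℕ):ℝ) + (u:ℕ) + b := by push_cast; ring
  rw [e2]
  have e3 : ((-1:ℝ))^(s+1+u) = -(-1:ℝ)^(s+u) := by
    rw [show s+1+u = (s+u)+1 by omega, pow_succ]
    ring
  rw [e3, cc]
  push_cast
  ring

lemma cc_diag_form (b : ℝ) (p t s : ℕ) (hst : s ≤ t) (htp : t ≤ p) :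
    cc (b + 2*(s:ℕ)) (p - s) (t - s)
      = (-1:ℝ)^(p+t) * ((p-s).choose (t-s) : ℝ) * genBinom ((p:ℝ) + t + b) (p - s) := by
  rw [cc]
  have e1 : ((p - s:ℕ):ℝ) + ((t - s:ℕ):ℝ) + (b + 2*(s:ℕ)) = (p:ℝ) + t + b := by
    push_cast [Nat.cast_sub (le_trans hst htp), Nat.cast_sub hst]
    ring
  have e2 : ((-1:ℝ))^((p-s)+(t-s)) = (-1)^(p+t) := by
    have hh : p + t = ((p-s)+(t-s)) + 2*s := by omega
    rw [hh, pow_add (-1:ℝ) (p-s+(t-s)) (2*s), pow_mul, neg_one_sq, one_pow, mul_one]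
  rw [e1, e2]

lemma rel2 (b : ℝ) (p t s : ℕ) (hst : s < t) (htp : t ≤ p) :
    ((s:ℝ) + t + b + 1) * cc (b + 2*((s+1:ℕ))) (p - (s+1)) (t - (s+1))
      = ((t:ℝ) - s) * cc (b + 2*(s:ℕ)) (p - s) (t - s) := by
  have hsp : s < p := lt_of_lt_of_le hst htp
  have hps : ((p:ℝ) - s) ≠ 0 := by
    have : (s:ℝ) < p := by exact_mod_cast hsp
    linarith
  apply mul_right_cancel₀ hps
  rw [cc_diag_form b p t (s+1) (by omega) htp, cc_diag_form b p t s (le_of_lt hst) htp]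
  have hcast : ((p - (s+1) : ℕ):ℝ) = (p:ℝ) - (s:ℝ) - 1 := by
    push_cast [Nat.cast_sub (show s+1 ≤ p by omega)]
    ring
  have hgb : genBinom ((p:ℝ)+(t:ℝ)+b) (p - s) * ((p:ℝ) - s)
      = genBinom ((p:ℝ)+(t:ℝ)+b) (p - (s+1)) * ((s:ℝ) + t + b + 1) := by
    have h4 := genBinom_succ_mul ((p:ℝ)+(t:ℝ)+b) (p - (s+1))
    rw [show (p - (s+1)) + 1 = p - s by omega] at h4
    rw [hcast] at h4
    rw [show (p:ℝ) - (s:ℝ) - 1 + 1 = (p:ℝ) - s by ring] at h4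
    rw [h4]
    ring
  have hch : ((p:ℝ) - s) * ((p - (s+1)).choose (t - (s+1)) : ℝ)
      = ((t:ℝ) - s) * ((p - s).choose (t - s) : ℝ) := by
    have h5 := Nat.add_one_mul_choose_eq (p - s - 1) (t - s - 1)
    rw [show p - s - 1 + 1 = p - s by omega, show t - s - 1 + 1 = t - s by omega] at h5
    have h6 : (((p-s:ℕ)):ℝ) * (((p - s - 1).choose (t - s - 1):ℕ) : ℝ)
        = (((p-s).choose (t-s) : ℕ):ℝ) * (((t-s:ℕ)):ℝ) := by exact_mod_cast h5
    rw [Nat.cast_sub (show s ≤ p by omega), Nat.cast_sub (le_of_lt hst)] at h6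
    rw [show p - (s+1) = p - s - 1 by omega, show t - (s+1) = t - s - 1 by omega]
    linarith [h6]
  linear_combination ((-1:ℝ)^(p+t) * (((s:ℝ)+(t:ℝ)+b+1)) * genBinom ((p:ℝ)+(t:ℝ)+b) (p-(s+1))) * hch
    - ((-1:ℝ)^(p+t) * ((t:ℝ)-(s:ℝ)) * (((p - s).choose (t - s)):ℝ)) * hgb

lemma prod_split (b : ℝ) (u p : ℕ) (h : u ≤ p) :
    genBinom (2*(u:ℝ)+b) u * genBinom ((p:ℝ)+(u:ℝ)+b) (p-u)
      = (p.choose u : ℝ) * genBinom ((p:ℝ)+(u:ℝ)+b) p := by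
  have h1 := Finset.prod_range_add (fun j => ((p:ℝ)+(u:ℝ)+b - (j:ℕ))) (p-u) u
  rw [show p - u + u = p by omega] at h1
  have h2 : (∏ j ∈ Finset.range u, ((p:ℝ)+(u:ℝ)+b - ((p-u+j:ℕ)):ℝ)
      = ∏ j ∈ Finset.range u, (2*(u:ℝ)+b - (j:ℕ))) := by
    apply Finset.prod_congr rfl
    intro j _
    push_cast [Nat.cast_sub h]
    ring
  rw [h2] at h1
  have h3 : (p.choose u : ℝ) * (u.factorial : ℝ) * ((p-u).factorial : ℝ) = (p.factorial : ℝ) := by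
    exact_mod_cast Nat.choose_mul_factorial_mul_factorial h
  simp only [genBinom]
  rw [h1]
  have f1 := fact_ne u
  have f2 := fact_ne (p-u)
  have f3 := fact_ne p
  field_simp
  linear_combination (-(∏ j ∈ Finset.range (p-u), ((p:ℝ)+(u:ℝ)+b - (j:ℕ))) * (∏ j ∈ Finset.range u, (2*(u:ℝ)+b - (j:ℕ)))) * h3
lemma cc_mul (b : ℝ) (u p : ℕ) (h : u ≤ p) :
    cc b u u * cc (b + 2*(u:ℕ)) (p-u) 0 = cc b p u := by
  have e0 : cc (b + 2*(u:ℕ)) (p-u) 0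
      = (-1:ℝ)^(p+u) * genBinom ((p:ℝ)+(u:ℝ)+b) (p-u) := by
    rw [cc]
    have e1 : (((p-u:ℕ)):ℝ) + ((0:ℕ):ℝ) + (b + 2*(u:ℕ)) = (p:ℝ)+(u:ℝ)+b := by
      push_cast [Nat.cast_sub h]; ring
    rw [e1]
    have e2 : ((-1:ℝ))^((p-u)+0) = (-1)^(p+u) := by
      rw [Nat.add_zero, neg_one_pow_sub p u h]
    rw [e2]
    simp
  have e3 : cc b u u = genBinom (2*(u:ℝ)+b) u := by
    rw [cc]
    have e4 : ((u:ℕ):ℝ) + ((u:ℕ):ℝ) + b = 2*(u:ℝ)+b := by push_cast; ring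
    have e5 : ((-1:ℝ))^(u+u) = 1 := by
      rw [show u+u = 2*u by omega, pow_mul, neg_one_sq, one_pow]
    rw [e4, e5]
    simp
  rw [e0, e3, cc]
  have e6 : ((p:ℕ):ℝ) + ((u:ℕ):ℝ) + b = (p:ℝ)+(u:ℝ)+b := by push_cast; ring
  rw [e6]
  have hps := prod_split b u p h
  linear_combination ((-1:ℝ)^(p+u)) * hps

lemma lemB (b : ℝ) (p u t : ℕ) (ht : t ≤ p) :
    (∑ s ∈ Finset.range (t+1),
      (cc b s u - if s = 0 then 0 else cc b (s-1) u) * cc (b + 2*(s:ℕ)) (p - s) (t - s))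
      = if t = u then cc b p u else 0 := by
  rcases lt_trichotomy t u with h | h | h
  · -- t < u : everything vanishes
    rw [if_neg (by omega)]
    apply Finset.sum_eq_zero
    intro s hs
    have hsu : s < u := by
      have := Finset.mem_range.mp hs; omega
    have h1 : cc b s u = 0 := cc_eq_zero _ _ _ hsu
    have h2 : (if s = 0 then (0:ℝ) else cc b (s-1) u) = 0 := by
      split
      · rfl
      · exact cc_eq_zero _ _ _ (by omega)
    rw [h1, h2, sub_zero, zero_mul]
  · -- t = u
    subst h
    rw [if_pos rfl]
    rw [Finset.sum_eq_single_of_mem t (by simp)]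
    · have e0 : t - t = 0 := Nat.sub_self t
      rw [e0]
      have h2 : (if t = 0 then (0:ℝ) else cc b (t-1) t) = 0 := by
        split
        · rfl
        · exact cc_eq_zero _ _ _ (by omega)
      rw [h2, sub_zero]
      exact cc_mul b t p ht
    · intro s hs hne
      have hsu : s < t := by
        have := Finset.mem_range.mp hs; omega
      have h1 : cc b s t = 0 := cc_eq_zero _ _ _ hsu
      have h2 : (if s = 0 then (0:ℝ) else cc b (s-1) t) = 0 := by
        split
        · rfl
        · exact cc_eq_zero _ _ _ (by omega)
      rw [h1, h2, sub_zero, zero_mul]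
  · -- u < t : telescoping
    rw [if_neg (by omega)]
    have htu : ((t:ℝ) - u) ≠ 0 := by
      have : (u:ℝ) < t := by exact_mod_cast h
      linarith
    set f : ℕ → ℝ := fun j => if 1 ≤ j ∧ j ≤ t then
        -(((j:ℝ)+t+b)) * cc b (j-1) u * cc (b + 2*(j:ℕ)) (p - j) (t - j) else 0 with hf
    have key : ∀ s ∈ Finset.range (t+1),
        ((cc b s u - if s = 0 then 0 else cc b (s-1) u) * cc (b + 2*(s:ℕ)) (p - s) (t - s))
          * ((t:ℝ) - u) = f s - f (s+1) := by
      intro s hs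
      have hst : s ≤ t := by
        have := Finset.mem_range.mp hs; omega
      have f0 : f 0 = 0 := by rw [hf]; simp
      rcases Nat.eq_zero_or_pos s with rfl | hspos
      · rw [if_pos rfl, sub_zero, f0]
        have f1 : f (0+1) = -((((0+1:ℕ)):ℝ)+t+b) * cc b (0+1-1) u * cc (b + 2*((0+1:ℕ))) (p - (0+1)) (t - (0+1)) := by
          simp only [hf]
          rw [if_pos (show 1 ≤ 0+1 ∧ 0+1 ≤ t by omega)]
        rw [f1]
        simp only [Nat.zero_add, Nat.cast_zero, Nat.cast_one, Nat.sub_zero, Nat.sub_self] at *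
        rcases Nat.eq_zero_or_pos u with rfl | hupos
        · have h2 := rel2 b p t 0 (by omega) ht
          simp only [Nat.zero_add, Nat.cast_zero, Nat.cast_one, Nat.sub_zero, Nat.sub_self] at h2
          linear_combination (norm := (push_cast; ring1)) (-(cc b 0 0)) * h2
        · have hz : cc b 0 u = 0 := cc_eq_zero _ _ _ hupos
          rw [hz]
          ring
      · obtain ⟨q, rfl⟩ : ∃ q, s = q+1 := ⟨s-1, by omega⟩
        rw [if_neg (by omega), Nat.add_sub_cancel]
        have fq1 : f (q+1) = -(((q:ℝ)+1+t+b)) * cc b q u * cc (b + 2*((q+1:ℕ))) (p - (q+1)) (t - (q+1)) := by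
          simp only [hf]
          rw [if_pos (show 1 ≤ q+1 ∧ q+1 ≤ t by omega), Nat.add_sub_cancel]
          push_cast
          ring
        have h1 := rel1 b u q
        rcases eq_or_lt_of_le (show q+1 ≤ t from hst) with hqt | hqt
        · have fq2 : f (q+1+1) = 0 := by
            simp only [hf]
            rw [if_neg (by omega)]
          rw [fq1, fq2, sub_zero]
          subst hqt
          linear_combination (norm := (push_cast; ring1))
            (cc (b + 2*((q+1:ℕ))) (p - (q+1)) ((q+1) - (q+1))) * h1
        · have fq2 : f (q+1+1) = -(((q:ℝ)+2+t+b)) * cc b (q+1) u * cc (b + 2*((q+1+1:ℕ))) (p - (q+1+1)) (t - (q+1+1)) := by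
            simp only [hf]
            rw [if_pos (show 1 ≤ q+1+1 ∧ q+1+1 ≤ t by omega), Nat.add_sub_cancel]
            push_cast
            ring
          have h2 := rel2 b p t (q+1) hqt ht
          rw [fq1, fq2]
          linear_combination (norm := (push_cast; ring1))
            (cc (b + 2*((q+1:ℕ))) (p - (q+1)) (t - (q+1))) * h1 - (cc b (q+1) u) * h2
    have hsum : (∑ s ∈ Finset.range (t+1),
        (cc b s u - if s = 0 then 0 else cc b (s-1) u) * cc (b + 2*(s:ℕ)) (p - s) (t - s))
          * ((t:ℝ) - u) = 0 := by
      rw [Finset.sum_mul, Finset.sum_congr rfl key, Finset.sum_range_sub' f (t+1)]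
      have f0 : f 0 = 0 := by rw [hf]; simp
      have fT : f (t+1) = 0 := by rw [hf]; simp only []; rw [if_neg (by omega)]
      rw [f0, fT, sub_zero]
    exact (mul_eq_zero.mp hsum).resolve_right htu
lemma abel_sum (A B : ℕ → ℝ) : ∀ n : ℕ,
    (∑ s ∈ Finset.range n, (A s - A (s+1)) * B s)
      = (∑ s ∈ Finset.range n, A s * (B s - if s = 0 then 0 else B (s-1)))
        - A n * (if n = 0 then 0 else B (n-1)) := by
  intro n
  induction n with
  | zero => simp
  | succ n ih =>
    rw [Finset.sum_range_succ, ih, Finset.sum_range_succ]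
    rw [if_neg (Nat.succ_ne_zero n), Nat.add_sub_cancel]
    ring

/-- scaling of standard 3D Zernike radial polynomials (`α = 0`), `n = l + 2p`:
`R_n^{l,0}(ερ) = Σ_{n'=l,l+2,…,n} (R_n^{n',0}(ε) − R_n^{n'+2,0}(ε)) R_{n'}^{l,0}(ρ)`,
where the term `R_n^{n+2,0}` occurring for `n' = n` (i.e. `s = p`) is interpreted as `0`. -/
theorem stmt7 (l p : ℕ) (ε : ℝ) (hε : ε ∈ Set.Icc (0:ℝ) 1) (ρ : ℝ) (hρ : ρ ∈ Set.Icc (0:ℝ) 1) :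
    R3 0 l p (ε * ρ)
      = ∑ s ∈ Finset.range (p + 1),
          (R3 0 (l + 2 * s) (p - s) ε -
            if s = p then 0 else R3 0 (l + 2 * s + 2) (p - s - 1) ε) * R3 0 l s ρ := by
  classical
  set b : ℝ := (l:ℝ) + 1/2 with hb
  set A : ℕ → ℝ := fun s => if s ≤ p then ε^l * (ε^2)^s * jacobiP (p-s) 0 (b + 2*(s:ℕ)) (2*ε^2 - 1) else 0 with hA
  set B : ℕ → ℝ := fun s => ρ^l * jacobiP s 0 b (2*ρ^2 - 1) with hB
  have hstep1 : ∀ s ∈ Finset.range (p+1),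
      (R3 0 (l + 2*s) (p - s) ε - if s = p then 0 else R3 0 (l + 2*s + 2) (p - s - 1) ε) * R3 0 l s ρ
        = (A s - A (s+1)) * B s := by
    intro s hs
    have hsp : s ≤ p := by simpa [Nat.lt_succ_iff] using hs
    have e1 : R3 0 (l + 2*s) (p - s) ε = A s := by
      simp only [hA]
      rw [if_pos hsp, R3, Real.rpow_zero, mul_one]
      have harg : ((l + 2*s : ℕ):ℝ) + 1/2 = b + 2*(s:ℕ) := by rw [hb]; push_cast; ring
      have hpow : ε ^ (l + 2*s) = ε^l * (ε^2)^s := by rw [pow_add, pow_mul]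
      rw [harg, hpow]
    have e2 : (if s = p then (0:ℝ) else R3 0 (l + 2*s + 2) (p - s - 1) ε) = A (s+1) := by
      rcases eq_or_lt_of_le hsp with rfl | hlt
      · rw [if_pos rfl]
        simp only [hA]
        rw [if_neg (by omega)]
      · rw [if_neg (by omega)]
        simp only [hA]
        rw [if_pos (by omega : s+1 ≤ p), R3, Real.rpow_zero, mul_one]
        have harg : ((l + 2*s + 2 : ℕ):ℝ) + 1/2 = b + 2*((s+1:ℕ)) := by rw [hb]; push_cast; ring
        have hidx : p - s - 1 = p - (s+1) := by omega
        have hpow : ε ^ (l + 2*s + 2) = ε^l * (ε^2)^(s+1) := by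
          rw [show l + 2*s + 2 = l + 2*(s+1) by ring, pow_add, pow_mul]
        rw [harg, hidx, hpow]
    have e3 : R3 0 l s ρ = B s := by
      simp only [hB]
      rw [R3, Real.rpow_zero, mul_one, ← hb]
    rw [e1, e2, e3]
  rw [Finset.sum_congr rfl hstep1, abel_sum A B (p+1)]
  have hAp1 : A (p+1) = 0 := by simp only [hA]; rw [if_neg (by omega)]
  rw [hAp1, zero_mul, sub_zero]
  -- expansions
  have hAexp : ∀ s ∈ Finset.range (p+1), A s
      = ∑ w ∈ Finset.range (p+1-s), ε^l * (cc (b + 2*(s:ℕ)) (p-s) w * (ε^2)^(s+w)) := by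
    intro s hs
    have hsp : s ≤ p := by simpa [Nat.lt_succ_iff] using hs
    simp only [hA]
    rw [if_pos hsp, jacobi_expand (b + 2*(s:ℕ)) (ε^2) (p-s), Finset.mul_sum]
    have hrange : p - s + 1 = p + 1 - s := by omega
    rw [hrange] at *
    apply Finset.sum_congr rfl
    intro w hw
    rw [pow_add]
    ring
  have hBexp : ∀ s, s ≤ p → jacobiP s 0 b (2*ρ^2 - 1) = ∑ u ∈ Finset.range (p+1), cc b s u * (ρ^2)^u := by
    intro s hsp
    rw [jacobi_expand b (ρ^2) s]
    apply Finset.sum_subset (Finset.range_subset_range.mpr (by omega))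
    intro u hu hnu
    have : s < u := by simp only [Finset.mem_range] at hnu ⊢; omega
    rw [cc_eq_zero _ _ _ this, zero_mul]
  have hBd : ∀ s ∈ Finset.range (p+1),
      B s - (if s = 0 then 0 else B (s-1))
        = ∑ u ∈ Finset.range (p+1), (cc b s u - if s = 0 then 0 else cc b (s-1) u) * ((ρ^2)^u * ρ^l) := by
    intro s hs
    have hsp : s ≤ p := by simpa [Nat.lt_succ_iff] using hs
    rcases Nat.eq_zero_or_pos s with rfl | hspos
    · rw [if_pos rfl, sub_zero]
      simp only [hB]
      rw [hBexp 0 (by omega), Finset.mul_sum]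
      apply Finset.sum_congr rfl
      intro u _
      rw [if_pos (by trivial), sub_zero]
      ring
    · rw [if_neg (by omega)]
      simp only [hB]
      rw [hBexp s hsp, hBexp (s-1) (by omega), Finset.mul_sum, Finset.mul_sum,
        ← Finset.sum_sub_distrib]
      apply Finset.sum_congr rfl
      intro u _
      rw [if_neg (by omega)]
      ring
  -- main computation per u
  have main : ∀ u ∈ Finset.range (p+1),
      (∑ s ∈ Finset.range (p+1), (cc b s u - if s = 0 then 0 else cc b (s-1) u) * ((ρ^2)^u * ρ^l) * A s)
        = ε^l * (ε^2)^u * cc b p u * ((ρ^2)^u * ρ^l) := by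
    intro u hu
    have hup : u ∈ Finset.range (p+1) := hu
    set f : ℕ → ℕ → ℝ := fun s w => ((ρ^2)^u * ρ^l * ε^l) *
        ((cc b s u - if s = 0 then 0 else cc b (s-1) u) * cc (b + 2*(s:ℕ)) (p-s) w * (ε^2)^(s+w)) with hfdef
    have e1 : ∀ s ∈ Finset.range (p+1),
        (cc b s u - if s = 0 then 0 else cc b (s-1) u) * ((ρ^2)^u * ρ^l) * A s
          = ∑ w ∈ Finset.range (p+1-s), f s w := by
      intro s hs
      rw [hAexp s hs, Finset.mul_sum]
      apply Finset.sum_congr rfl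
      intro w _
      simp only [hfdef]
      ring
    rw [Finset.sum_congr rfl e1, ← Finset.sum_range_diag_flip (p+1) f]
    have e2 : ∀ t ∈ Finset.range (p+1),
        (∑ s ∈ Finset.range (t+1), f s (t-s))
          = (((ρ^2)^u * ρ^l * ε^l) * (ε^2)^t) * (if t = u then cc b p u else 0) := by
      intro t ht
      have htp : t ≤ p := by simpa [Nat.lt_succ_iff] using ht
      have e3 : ∀ s ∈ Finset.range (t+1), f s (t-s)
          = (((ρ^2)^u * ρ^l * ε^l) * (ε^2)^t) *
            ((cc b s u - if s = 0 then 0 else cc b (s-1) u) * cc (b + 2*(s:ℕ)) (p-s) (t-s)) := by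
        intro s hs
        have hst : s ≤ t := by simpa [Nat.lt_succ_iff] using hs
        simp only [hfdef]
        rw [show s + (t-s) = t by omega]
        ring
      rw [Finset.sum_congr rfl e3, ← Finset.mul_sum, lemB b p u t htp]
    rw [Finset.sum_congr rfl e2]
    simp only [mul_ite, mul_zero]
    rw [Finset.sum_ite_eq' (Finset.range (p+1)) u
      (fun t => (((ρ^2)^u * ρ^l * ε^l) * (ε^2)^t) * cc b p u)]
    rw [if_pos hup]
    ring
  have h1 : ∀ s ∈ Finset.range (p+1), A s * (B s - if s = 0 then 0 else B (s-1))
      = ∑ u ∈ Finset.range (p+1), (cc b s u - if s = 0 then 0 else cc b (s-1) u) * ((ρ^2)^u * ρ^l) * A s := by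
    intro s hs
    rw [hBd s hs, Finset.mul_sum]
    apply Finset.sum_congr rfl
    intro u _
    ring
  rw [Finset.sum_congr rfl h1, Finset.sum_comm, Finset.sum_congr rfl main]
  -- left side
  rw [R3, Real.rpow_zero, mul_one, ← hb, jacobi_expand b ((ε*ρ)^2) p, Finset.mul_sum]
  apply Finset.sum_congr rfl
  intro m _
  ring
end Stmt7Aux
end
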